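/- Fix a positive integer k and define f(c) = (∑_{i=0}^{k} (1 - i/k) · C(k,i)² · cⁱ) / (∑_{i=0}^{k} C(k,i)² · cⁱ) for c > 0. Then f is nonincreasing on (0, ∞): for all real numbers 0 < c₁ ≤ c₂ one has f(c₂) ≤ f(c₁). -/

import Mathlib

open Finset

lemma key_cheb (n : ℕ) (w b : ℕ → ℝ) (hb : ∀ i, 0 ≤ b i)
    (hw : ∀ i j : ℕ, i ≤ j → w i ≤ w j)
    (c₁ c₂ : ℝ) (h0 : 0 ≤ c₁) (h : c₁ ≤ c₂) :
    (∑ i ∈ range n, w i * b i * c₁ ^ i) * (∑ j ∈ range n, b j * c₂ ^ j)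
      ≤ (∑ i ∈ range n, w i * b i * c₂ ^ i) * (∑ j ∈ range n, b j * c₁ ^ j) := by
  have key0 : ∀ i j : ℕ, i ≤ j → c₂ ^ i * c₁ ^ j ≤ c₁ ^ i * c₂ ^ j := by
    intro i j hij
    have h1 : c₁ ^ j = c₁ ^ i * c₁ ^ (j - i) := by rw [← pow_add]; congr 1; omega
    have h2 : c₂ ^ j = c₂ ^ i * c₂ ^ (j - i) := by rw [← pow_add]; congr 1; omega
    have hc1i : (0:ℝ) ≤ c₁ ^ i := pow_nonneg h0 i
    have hc2i : (0:ℝ) ≤ c₂ ^ i := pow_nonneg (h0.trans h) i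
    have hp := pow_le_pow_left₀ h0 h (j - i)
    calc c₂ ^ i * c₁ ^ j = c₁ ^ i * c₂ ^ i * c₁ ^ (j - i) := by rw [h1]; ring
      _ ≤ c₁ ^ i * c₂ ^ i * c₂ ^ (j - i) :=
        mul_le_mul_of_nonneg_left hp (mul_nonneg hc1i hc2i)
      _ = c₁ ^ i * c₂ ^ j := by rw [h2]; ring
  set T : ℝ := ∑ i ∈ range n, ∑ j ∈ range n,
      w i * (b i * b j) * (c₂ ^ i * c₁ ^ j - c₁ ^ i * c₂ ^ j) with hT
  have hA : ∑ i ∈ range n, ∑ j ∈ range n,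
      w j * (b i * b j) * (c₂ ^ i * c₁ ^ j - c₁ ^ i * c₂ ^ j) = -T := by
    rw [Finset.sum_comm, hT, ← Finset.sum_neg_distrib]
    refine Finset.sum_congr rfl fun j _ => ?_
    rw [← Finset.sum_neg_distrib]
    refine Finset.sum_congr rfl fun i _ => ?_
    ring
  have hS : 0 ≤ ∑ i ∈ range n, ∑ j ∈ range n,
      (w i - w j) * (b i * b j) * (c₂ ^ i * c₁ ^ j - c₁ ^ i * c₂ ^ j) := by
    refine Finset.sum_nonneg fun i _ => Finset.sum_nonneg fun j _ => ?_
    rcases le_total i j with hij | hij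
    · have h1 : w i - w j ≤ 0 := by linarith [hw i j hij]
      have h2 : c₂ ^ i * c₁ ^ j - c₁ ^ i * c₂ ^ j ≤ 0 := by linarith [key0 i j hij]
      have h3 : 0 ≤ b i * b j := mul_nonneg (hb i) (hb j)
      have h4 := mul_nonneg (mul_nonneg (neg_nonneg.2 h1) h3) (neg_nonneg.2 h2)
      nlinarith [h4]
    · have h1 : 0 ≤ w i - w j := by linarith [hw j i hij]
      have h2 : 0 ≤ c₂ ^ i * c₁ ^ j - c₁ ^ i * c₂ ^ j := by linarith [key0 j i hij]
      have h3 : 0 ≤ b i * b j := mul_nonneg (hb i) (hb j)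
      positivity
  have hsplit : ∑ i ∈ range n, ∑ j ∈ range n,
      (w i - w j) * (b i * b j) * (c₂ ^ i * c₁ ^ j - c₁ ^ i * c₂ ^ j) = 2 * T := by
    have : ∀ i ∈ range n, ∑ j ∈ range n,
        (w i - w j) * (b i * b j) * (c₂ ^ i * c₁ ^ j - c₁ ^ i * c₂ ^ j)
        = ∑ j ∈ range n, (w i * (b i * b j) * (c₂ ^ i * c₁ ^ j - c₁ ^ i * c₂ ^ j)
          - w j * (b i * b j) * (c₂ ^ i * c₁ ^ j - c₁ ^ i * c₂ ^ j)) := by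
      intro i _
      refine Finset.sum_congr rfl fun j _ => ?_
      ring
    rw [Finset.sum_congr rfl this]
    simp only [Finset.sum_sub_distrib]
    rw [hA]
    ring
  have hTnn : 0 ≤ T := by linarith [hsplit ▸ hS]
  have hExp : (∑ i ∈ range n, w i * b i * c₂ ^ i) * (∑ j ∈ range n, b j * c₁ ^ j)
      - (∑ i ∈ range n, w i * b i * c₁ ^ i) * (∑ j ∈ range n, b j * c₂ ^ j) = T := by
    rw [Finset.sum_mul_sum, Finset.sum_mul_sum, hT, ← Finset.sum_sub_distrib]
    refine Finset.sum_congr rfl fun i _ => ?_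
    rw [← Finset.sum_sub_distrib]
    refine Finset.sum_congr rfl fun j _ => ?_
    ring
  linarith

theorem stmt_1 (k : ℕ) (hk : 0 < k)
    (f : ℝ → ℝ)
    (hf : ∀ c : ℝ, 0 < c →
      f c = (∑ i ∈ range (k + 1), (1 - (i : ℝ) / k) * (k.choose i : ℝ) ^ 2 * c ^ i) /
        (∑ i ∈ range (k + 1), (k.choose i : ℝ) ^ 2 * c ^ i))
    (c₁ c₂ : ℝ) (hc₁ : 0 < c₁) (h : c₁ ≤ c₂) :
    f c₂ ≤ f c₁ := by
  have hc₂ : 0 < c₂ := lt_of_lt_of_le hc₁ h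
  rw [hf c₁ hc₁, hf c₂ hc₂]
  have hDpos : ∀ c : ℝ, 0 < c → 0 < ∑ i ∈ range (k + 1), (k.choose i : ℝ) ^ 2 * c ^ i := by
    intro c hc
    refine Finset.sum_pos' (fun i _ => by positivity) ⟨0, Finset.mem_range.2 (by omega), ?_⟩
    simp
  have hD1 := hDpos c₁ hc₁
  have hD2 := hDpos c₂ hc₂
  rw [div_le_div_iff₀ hD2 hD1]
  have hN : ∀ c : ℝ, (∑ i ∈ range (k + 1), (1 - (i : ℝ) / k) * (k.choose i : ℝ) ^ 2 * c ^ i)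
      = (∑ i ∈ range (k + 1), (k.choose i : ℝ) ^ 2 * c ^ i)
        - ∑ i ∈ range (k + 1), ((i : ℝ) / k) * (k.choose i : ℝ) ^ 2 * c ^ i := by
    intro c
    rw [← Finset.sum_sub_distrib]
    refine Finset.sum_congr rfl fun i _ => ?_
    ring
  rw [hN c₁, hN c₂]
  have hkey := key_cheb (k + 1) (fun i => (i : ℝ) / k) (fun i => (k.choose i : ℝ) ^ 2)
    (fun i => by positivity)
    (fun i j hij =>
      div_le_div_of_nonneg_right (by exact_mod_cast hij) (Nat.cast_pos.2 hk).le)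
    c₁ c₂ hc₁.le h
  nlinarith [hkey]
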